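/- Let S be a finite set with |S| = n ≥ 3 and let 2 ≤ r ≤ n−1. If C is a collection of r-element subsets of S such that any two distinct members X, Y ∈ C satisfy |X ∩ Y| ≤ r−2, then the collection B = (all r-subsets of S) \ C is nonempty and satisfies the basis exchange axiom: for all B₁, B₂ ∈ B and x ∈ B₁ \ B₂ there exists y ∈ B₂ \ B₁ with (B₁ \ {x}) ∪ {y} ∈ B. Hence B is the set of bases of a matroid of rank r on S. -/

import Mathlib

theorem aux_ne (n r : ℕ) (hr2 : 2 ≤ r) (hrn : r ≤ n - 1) (hn : 3 ≤ n)
    (C : Finset (Finset (Fin n)))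
    (hCap : ∀ X ∈ C, ∀ Y ∈ C, X ≠ Y → (X ∩ Y).card ≤ r - 2) :
    (((Finset.univ : Finset (Fin n)).powersetCard r) \ C).Nonempty := by
  have hrn' : r ≤ n := by omega
  obtain ⟨X, hXsub, hXr⟩ := Finset.exists_subset_card_eq
    (by simpa using hrn' : r ≤ (Finset.univ : Finset (Fin n)).card)
  by_cases hXC : X ∈ C
  · -- modify X by one element
    have hx : X.Nonempty := by rw [← Finset.card_pos, hXr]; omega
    obtain ⟨x, hxX⟩ := hx
    have : X ≠ Finset.univ := by
      intro h
      have := Finset.card_univ (α := Fin n)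
      rw [h] at hXr
      simp [Fintype.card_fin] at hXr
      omega
    obtain ⟨y, hyX⟩ : ∃ y, y ∉ X := by
      by_contra h
      push_neg at h
      exact this (Finset.eq_univ_iff_forall.mpr h)
    set Y := insert y (X.erase x) with hY
    have hyne : Y ≠ X := by
      intro h
      exact hyX (h ▸ Finset.mem_insert_self y _)
    have hYr : Y.card = r := by
      rw [hY, Finset.card_insert_of_notMem (fun h => hyX (Finset.mem_of_mem_erase h)),
        Finset.card_erase_of_mem hxX, hXr]
      omega
    refine ⟨Y, Finset.mem_sdiff.mpr ⟨Finset.mem_powersetCard_univ.mpr hYr, ?_⟩⟩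
    intro hYC
    have hsub : X.erase x ⊆ X ∩ Y := by
      intro w hw
      exact Finset.mem_inter.mpr ⟨Finset.mem_of_mem_erase hw, Finset.mem_insert_of_mem hw⟩
    have := hCap X hXC Y hYC (Ne.symm hyne)
    have h1 : r - 1 ≤ (X ∩ Y).card := by
      calc r - 1 = (X.erase x).card := by rw [Finset.card_erase_of_mem hxX, hXr]
      _ ≤ _ := Finset.card_le_card hsub
    omega
  · exact ⟨X, Finset.mem_sdiff.mpr ⟨Finset.mem_powersetCard_univ.mpr hXr, hXC⟩⟩

theorem aux_exch (n r : ℕ) (hr2 : 2 ≤ r)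
    (C : Finset (Finset (Fin n))) (hCr : ∀ X ∈ C, X.card = r)
    (hCap : ∀ X ∈ C, ∀ Y ∈ C, X ≠ Y → (X ∩ Y).card ≤ r - 2) :
    (∀ B₁ ∈ ((Finset.univ : Finset (Fin n)).powersetCard r) \ C,
      ∀ B₂ ∈ ((Finset.univ : Finset (Fin n)).powersetCard r) \ C,
      ∀ x ∈ B₁ \ B₂, ∃ y ∈ B₂ \ B₁,
        insert y (B₁.erase x) ∈ ((Finset.univ : Finset (Fin n)).powersetCard r) \ C) := by
  intro B₁ hB₁ B₂ hB₂ x hx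
  simp only [Finset.mem_sdiff, Finset.mem_powersetCard_univ] at hB₁ hB₂ ⊢
  obtain ⟨hB₁r, hB₁C⟩ := hB₁
  obtain ⟨hB₂r, hB₂C⟩ := hB₂
  rw [Finset.mem_sdiff] at hx
  obtain ⟨hxB₁, hxB₂⟩ := hx
  have hcardeq : B₁.card = B₂.card := hB₁r.trans hB₂r.symm
  have hcard : ∀ y ∈ B₂ \ B₁, (insert y (B₁.erase x)).card = r := by
    intro y hy
    rw [Finset.mem_sdiff] at hy
    rw [Finset.card_insert_of_notMem (fun h => hy.2 (Finset.mem_of_mem_erase h)),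
      Finset.card_erase_of_mem hxB₁, hB₁r]
    omega
  have hDne : (B₂ \ B₁).Nonempty := by
    rw [← Finset.card_pos, ← Finset.card_sdiff_comm hcardeq, Finset.card_pos]
    exact ⟨x, Finset.mem_sdiff.mpr ⟨hxB₁, hxB₂⟩⟩
  by_cases hone : (B₂ \ B₁).card = 1
  · obtain ⟨y, hy⟩ := Finset.card_eq_one.mp hone
    have hym : y ∈ B₂ \ B₁ := by rw [hy]; exact Finset.mem_singleton_self y
    rw [Finset.mem_sdiff] at hym
    refine ⟨y, hym, ?_⟩
    have hxonly : B₁ \ B₂ = {x} := by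
      symm
      apply Finset.eq_of_subset_of_card_le
      · intro w hw
        rw [Finset.mem_singleton] at hw
        exact hw ▸ Finset.mem_sdiff.mpr ⟨hxB₁, hxB₂⟩
      · rw [Finset.card_sdiff_comm hcardeq, hone, Finset.card_singleton]
    have heq : insert y (B₁.erase x) = B₂ := by
      apply Finset.eq_of_subset_of_card_le
      · intro z hz
        rcases Finset.mem_insert.mp hz with h | h
        · exact h ▸ hym.1
        · by_contra hzB₂
          have : z ∈ B₁ \ B₂ :=
            Finset.mem_sdiff.mpr ⟨Finset.mem_of_mem_erase h, hzB₂⟩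
          rw [hxonly, Finset.mem_singleton] at this
          exact Finset.ne_of_mem_erase h this
      · rw [hB₂r, hcard y (Finset.mem_sdiff.mpr hym)]
    rw [heq]
    exact ⟨hB₂r, hB₂C⟩
  · -- |B₂ \ B₁| ≥ 2 : pick two distinct elements
    have h2 : 2 ≤ (B₂ \ B₁).card := by
      have := Finset.card_pos.mpr hDne; omega
    obtain ⟨T, hTsub, hT2⟩ := Finset.exists_subset_card_eq h2
    obtain ⟨y₁, y₂, hne, hTeq⟩ := Finset.card_eq_two.mp hT2
    have hy₁ : y₁ ∈ B₂ \ B₁ := hTsub (by rw [hTeq]; simp)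
    have hy₂ : y₂ ∈ B₂ \ B₁ := hTsub (by rw [hTeq]; simp)
    by_cases hc1 : insert y₁ (B₁.erase x) ∈ C
    · by_cases hc2 : insert y₂ (B₁.erase x) ∈ C
      · exfalso
        have hne' : insert y₁ (B₁.erase x) ≠ insert y₂ (B₁.erase x) := by
          intro h
          have hy1mem : y₁ ∈ insert y₂ (B₁.erase x) := h ▸ Finset.mem_insert_self _ _
          rcases Finset.mem_insert.mp hy1mem with h' | h'
          · exact hne h'
          · exact (Finset.mem_sdiff.mp hy₁).2 (Finset.mem_of_mem_erase h')
        have hsub : B₁.erase x ⊆ insert y₁ (B₁.erase x) ∩ insert y₂ (B₁.erase x) := by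
          intro w hw
          exact Finset.mem_inter.mpr ⟨Finset.mem_insert_of_mem hw, Finset.mem_insert_of_mem hw⟩
        have hge : r - 1 ≤ (insert y₁ (B₁.erase x) ∩ insert y₂ (B₁.erase x)).card := by
          calc r - 1 = (B₁.erase x).card := by rw [Finset.card_erase_of_mem hxB₁, hB₁r]
          _ ≤ _ := Finset.card_le_card hsub
        have := hCap _ hc1 _ hc2 hne'
        omega
      · exact ⟨y₂, Finset.mem_sdiff.mp hy₂, hcard y₂ hy₂, hc2⟩
    · exact ⟨y₁, Finset.mem_sdiff.mp hy₁, hcard y₁ hy₁, hc1⟩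

theorem aux_mat (n r : ℕ)
    (C : Finset (Finset (Fin n)))
    (hne : (((Finset.univ : Finset (Fin n)).powersetCard r) \ C).Nonempty)
    (hexch : ∀ B₁ ∈ ((Finset.univ : Finset (Fin n)).powersetCard r) \ C,
      ∀ B₂ ∈ ((Finset.univ : Finset (Fin n)).powersetCard r) \ C,
      ∀ x ∈ B₁ \ B₂, ∃ y ∈ B₂ \ B₁,
        insert y (B₁.erase x) ∈ ((Finset.univ : Finset (Fin n)).powersetCard r) \ C) :
    (∃ M : Matroid (Fin n), M.E = Set.univ ∧
      (∀ B : Set (Fin n), M.IsBase B ↔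
        ∃ b ∈ ((Finset.univ : Finset (Fin n)).powersetCard r) \ C, B = ↑b) ∧
      (∀ B : Set (Fin n), M.IsBase B → B.ncard = r)) := by
  set P := ((Finset.univ : Finset (Fin n)).powersetCard r) \ C with hP
  set Base : Set (Fin n) → Prop := fun B => ∃ b ∈ P, B = ↑b with hBase
  have hex : ∃ B, Base B := by
    obtain ⟨b, hb⟩ := hne
    exact ⟨↑b, b, hb, rfl⟩
  have hexch' : Matroid.ExchangeProperty Base := by
    rintro X Y ⟨b₁, hb₁, rfl⟩ ⟨b₂, hb₂, rfl⟩ a ha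
    have ha' : a ∈ b₁ \ b₂ := by
      rw [Finset.mem_sdiff]
      exact ⟨by exact_mod_cast ha.1, by exact_mod_cast ha.2⟩
    obtain ⟨y, hy, hmem⟩ := hexch b₁ hb₁ b₂ hb₂ a ha'
    rw [Finset.mem_sdiff] at hy
    refine ⟨y, ⟨by exact_mod_cast hy.1, by exact_mod_cast hy.2⟩, ?_⟩
    refine ⟨insert y (b₁.erase a), hmem, ?_⟩
    push_cast [Finset.coe_erase]
    rfl
  refine ⟨Matroid.ofIsBaseOfFinite (Set.finite_univ) Base hex hexch'
    (fun B _ => Set.subset_univ B), rfl, fun B => Iff.rfl, ?_⟩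
  rintro B ⟨b, hb, rfl⟩
  rw [Set.ncard_coe_finset]
  exact Finset.mem_powersetCard_univ.mp (Finset.mem_sdiff.mp hb).1

/-- If `C` is a family of `r`-subsets of a set of size `n ≥ 3`
(`2 ≤ r ≤ n-1`) with pairwise intersections of size at most `r-2`, then
`B = (all r-subsets) \ C` is nonempty, satisfies the basis exchange axiom,
and is the set of bases of a matroid of rank `r`. -/
theorem stmt0 (n r : ℕ) (hn : 3 ≤ n) (hr2 : 2 ≤ r) (hrn : r ≤ n - 1)
    (C : Finset (Finset (Fin n))) (hCr : ∀ X ∈ C, X.card = r)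
    (hCap : ∀ X ∈ C, ∀ Y ∈ C, X ≠ Y → (X ∩ Y).card ≤ r - 2) :
    (((Finset.univ : Finset (Fin n)).powersetCard r) \ C).Nonempty ∧
    (∀ B₁ ∈ ((Finset.univ : Finset (Fin n)).powersetCard r) \ C,
      ∀ B₂ ∈ ((Finset.univ : Finset (Fin n)).powersetCard r) \ C,
      ∀ x ∈ B₁ \ B₂, ∃ y ∈ B₂ \ B₁,
        insert y (B₁.erase x) ∈ ((Finset.univ : Finset (Fin n)).powersetCard r) \ C) ∧
    (∃ M : Matroid (Fin n), M.E = Set.univ ∧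
      (∀ B : Set (Fin n), M.IsBase B ↔
        ∃ b ∈ ((Finset.univ : Finset (Fin n)).powersetCard r) \ C, B = ↑b) ∧
      (∀ B : Set (Fin n), M.IsBase B → B.ncard = r)) := by
  exact ⟨aux_ne n r hr2 hrn hn C hCap, aux_exch n r hr2 C hCr hCap,
    aux_mat n r C (aux_ne n r hr2 hrn hn C hCap) (aux_exch n r hr2 C hCr hCap)⟩
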